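/- arXiv:2502.09633 — 4 statements merged into one kernel-verified Lean document; each statement's English description precedes it below -/
import Mathlib

section
/- For every integer n ≥ 1, the identity 1 = (-1)^(n+1) · (4n+2) · ∑_{k=0}^{n} (2n)! / (n! · k! · (n-k)!) · B_{n+k+1}/(n+k+1) holds, where B_m denotes the m-th Bernoulli number. -/
section Aux
open Polynomial Finset

/-- The umbral linear functional sending `X^i` to the `i`-th Bernoulli number. -/
noncomputable def Ub : ℚ[X] →ₗ[ℚ] ℚ :=
  Polynomial.lsum (fun i => LinearMap.toSpanSingleton ℚ ℚ (_root_.bernoulli i))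

lemma Ub_monomial (i : ℕ) (a : ℚ) : Ub (Polynomial.monomial i a) = a * _root_.bernoulli i := by
  rw [Ub, Polynomial.lsum_apply, Polynomial.sum_monomial_index]
  · simp [LinearMap.toSpanSingleton_apply, smul_eq_mul]
  · simp

lemma Ub_X_pow (m : ℕ) : Ub ((X : ℚ[X])^m) = _root_.bernoulli m := by
  rw [← Polynomial.monomial_one_right_eq_X_pow, Ub_monomial, one_mul]

lemma Ub_C (a : ℚ) : Ub (C a) = a := by
  rw [← Polynomial.monomial_zero_left, Ub_monomial]
  simp

lemma Ub_add_pow (c : ℚ) (m : ℕ) :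
    Ub ((X + C c)^m) = (Polynomial.bernoulli m).eval c := by
  rw [add_pow, map_sum, Polynomial.bernoulli, Polynomial.eval_finset_sum]
  refine Finset.sum_congr rfl fun i hi => ?_
  have : (X : ℚ[X])^i * C c ^ (m - i) * (m.choose i : ℚ[X]) =
      Polynomial.monomial i (c ^ (m-i) * (m.choose i : ℚ)) := by
    rw [← Polynomial.C_pow, ← Polynomial.C_eq_natCast, mul_assoc, ← Polynomial.C_mul,
      mul_comm ((X : ℚ[X])^i), Polynomial.C_mul_X_pow_eq_monomial]
  rw [this, Ub_monomial, Polynomial.eval_monomial]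
  ring

lemma bernoulli_refl : ∀ m : ℕ, (Polynomial.bernoulli m).comp (1 - X) =
    C ((-1 : ℚ)^m) * Polynomial.bernoulli m := by
  intro m
  induction m with
  | zero => simp
  | succ k ih =>
    set d : ℚ[X] := (Polynomial.bernoulli (k+1)).comp (1 - X) -
      C ((-1 : ℚ)^(k+1)) * Polynomial.bernoulli (k+1) with hd
    have hderiv : derivative d = 0 := by
      rw [hd, derivative_sub, derivative_comp, Polynomial.derivative_bernoulli_add_one,
        derivative_mul, derivative_C, Polynomial.derivative_bernoulli_add_one]
      rw [mul_comp, add_comp, natCast_comp, one_comp, ih]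
      simp only [derivative_sub, derivative_one, derivative_X, zero_sub, pow_succ, C_mul, C_neg,
        C_1]
      ring
    have hC : d = C (d.eval 1) := by
      have := Polynomial.eq_C_of_derivative_eq_zero hderiv
      rw [this, Polynomial.eval_C]
    have he : d.eval 1 = 0 := by
      rw [hd]
      simp only [Polynomial.eval_sub, Polynomial.eval_comp, Polynomial.eval_mul,
        Polynomial.eval_C, Polynomial.eval_sub, Polynomial.eval_one, Polynomial.eval_X,
        sub_self, Polynomial.bernoulli_eval_zero, Polynomial.bernoulli_eval_one]
      rw [_root_.bernoulli]
      ring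
    have h0 : d = 0 := by rw [hC, he, map_zero]
    rw [hd] at h0
    exact sub_eq_zero.mp h0

lemma bernoulli_eval_half_odd (j : ℕ) :
    (Polynomial.bernoulli (2*j+1)).eval (1/2 : ℚ) = 0 := by
  have h := congrArg (Polynomial.eval (1/2 : ℚ)) (bernoulli_refl (2*j+1))
  simp only [Polynomial.eval_comp, Polynomial.eval_mul, Polynomial.eval_C, Polynomial.eval_sub,
    Polynomial.eval_one, Polynomial.eval_X] at h
  norm_num [pow_succ, pow_mul] at h
  linarith

lemma alt_choose_sum (n : ℕ) (hn : 1 ≤ n) :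
    ∑ j ∈ Finset.range (n+1), (-1 : ℚ)^j * (n.choose j) = 0 := by
  have := Int.alternating_sum_range_choose (n := n)
  rw [if_neg (by omega)] at this
  have := congrArg (fun z : ℤ => (z : ℚ)) this
  push_cast at this
  simpa using this

lemma choose_mul_sub (n j : ℕ) (hj : j ≤ n + 1) :
    ((n + 1 : ℚ) - j) * ((n+1).choose j) = (n + 1) * (n.choose j) := by
  have h1 : (n+1).choose (j+1) * (j+1) = (n+1).choose j * (n + 1 - j) :=
    Nat.choose_succ_right_eq (n+1) j
  have h2 : (n+1) * n.choose j = (n+1).choose (j+1) * (j+1) := Nat.add_one_mul_choose_eq n j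
  have h3 : ((n + 1 - j : ℕ) : ℚ) = (n + 1 : ℚ) - j := by
    push_cast [Nat.cast_sub hj]
    ring
  have := congrArg (fun z : ℕ => (z : ℚ)) (h2.trans h1)
  push_cast [← h3] at this ⊢
  linarith [this]

lemma wallis_sum (n : ℕ) :
    ∑ j ∈ Finset.range (n+1), (n.choose j : ℚ) * (-1)^j / (2*j+1)
      = 4^n * (n.factorial : ℚ)^2 / ((2*n+1).factorial) := by
  induction n with
  | zero => simp
  | succ n ih =>
    set A : ℕ → ℚ := fun m => ∑ j ∈ Finset.range (m+1), (m.choose j : ℚ) * (-1)^j / (2*j+1)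
      with hA
    have key : (2*(n+1)+1 : ℚ) * A (n+1) = (2*(n+1)) * A n := by
      have expand : (2*(n+1)+1 : ℚ) * A (n+1) =
          ∑ j ∈ Finset.range (n+2), ((-1:ℚ)^j * ((n+1).choose j)
            + 2 * ((n+1).choose j : ℚ) * (-1)^j * ((n+1 : ℚ) - j) / (2*j+1)) := by
        rw [hA, Finset.mul_sum]
        refine Finset.sum_congr rfl fun j hj => ?_
        have hne : (2*(j:ℚ)+1) ≠ 0 := by positivity
        field_simp
        ring
      rw [expand, Finset.sum_add_distrib, alt_choose_sum (n+1) (by omega), zero_add,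
        Finset.sum_range_succ]
      have hlast : 2 * (((n+1).choose (n+1) : ℚ)) * (-1)^(n+1) *
          ((n:ℚ) + 1 - ((n+1 : ℕ) : ℚ)) / (2*((n+1:ℕ):ℚ)+1) = 0 := by
        push_cast; ring
      rw [hlast, add_zero, hA, Finset.mul_sum]
      refine Finset.sum_congr rfl fun j hj => ?_
      rw [Finset.mem_range] at hj
      have hcs := choose_mul_sub n j (by omega)
      have hne : (2*(j:ℚ)+1) ≠ 0 := by positivity
      field_simp
      linear_combination hcs
    have h3 : (2*((n:ℚ)+1)+1) ≠ 0 := by positivity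
    have : A (n+1) = (2*(n+1)) * A n / (2*(n+1)+1) := by
      field_simp at key ⊢
      linarith [key]
    rw [hA] at this
    push_cast at this ⊢
    rw [this, ih]
    have hf1 : ((2*(n+1)+1).factorial : ℚ) = (2*(n+1)+1) * (2*(n+1)) * (2*n+1).factorial := by
      have : 2*(n+1)+1 = (2*n+1) + 1 + 1 := by ring
      rw [this, Nat.factorial_succ, Nat.factorial_succ]
      push_cast
      ring
    have hf2 : ((n+1).factorial : ℚ) = (n+1) * n.factorial := by
      rw [Nat.factorial_succ]; push_cast; ring
    push_cast at hf1 hf2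
    rw [hf1, hf2]
    have p1 : ((2*n+1).factorial : ℚ) ≠ 0 := by positivity
    field_simp
    ring

lemma base_eq : ((X : ℚ[X]) + C (1/2 : ℚ))^2 + C (-1/4 : ℚ) = X * (X + 1) := by
  have h1 : (C (1/2:ℚ) : ℚ[X]) + C (1/2:ℚ) = 1 := by rw [← C_add]; norm_num
  have h2 : (C (1/2:ℚ) : ℚ[X]) * C (1/2:ℚ) + C (-1/4:ℚ) = 0 := by
    rw [← C_mul, ← C_add]; norm_num
  linear_combination (X : ℚ[X]) * h1 + h2

lemma polyid (n : ℕ) :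
    (∑ k ∈ Finset.range (n+1), ((n.choose k : ℚ)/(n+k+1)) • (X : ℚ[X])^(n+k+1))
    = ∑ j ∈ Finset.range (n+1), ((n.choose j : ℚ) * (-1/4)^(n-j) / (2*j+1)) •
        ((X + C (1/2 : ℚ))^(2*j+1) - C ((1/2 : ℚ)^(2*j+1))) := by
  set P : ℚ[X] := ∑ k ∈ Finset.range (n+1), ((n.choose k : ℚ)/(n+k+1)) • (X : ℚ[X])^(n+k+1)
    with hP
  set R : ℚ[X] := ∑ j ∈ Finset.range (n+1), ((n.choose j : ℚ) * (-1/4)^(n-j) / (2*j+1)) •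
        ((X + C (1/2 : ℚ))^(2*j+1) - C ((1/2 : ℚ)^(2*j+1))) with hR
  have hdP : derivative P = X^n * (X + 1)^n := by
    rw [hP, derivative_sum]
    rw [add_pow, Finset.mul_sum]
    refine Finset.sum_congr rfl fun k hk => ?_
    rw [derivative_smul, derivative_X_pow]
    have hne : ((n:ℚ)+(k:ℚ)+1) ≠ 0 := by positivity
    rw [Polynomial.smul_eq_C_mul, Nat.add_sub_cancel]
    rw [← mul_assoc, ← C_mul]
    push_cast
    rw [div_mul_cancel₀ _ hne]
    rw [one_pow, mul_one, C_eq_natCast, pow_add]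
    ring
  have hdR : derivative R = X^n * (X + 1)^n := by
    rw [hR, derivative_sum]
    have hbase : (X : ℚ[X])^n * (X+1)^n = (((X + C (1/2:ℚ))^2) + C (-1/4 : ℚ))^n := by
      rw [base_eq, mul_pow]
    rw [hbase, add_pow]
    refine Finset.sum_congr rfl fun j hj => ?_
    rw [derivative_smul, derivative_sub, derivative_C, sub_zero, derivative_pow,
      derivative_add, derivative_X, derivative_C, add_zero, mul_one]
    rw [Nat.add_sub_cancel, ← pow_mul, Polynomial.smul_eq_C_mul, ← C_pow]
    rw [← mul_assoc, ← C_mul]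
    conv_rhs => rw [mul_assoc, ← C_eq_natCast, ← C_mul, mul_comm]
    congr 1
    apply congrArg C
    have hne : (2*(j:ℚ)+1) ≠ 0 := by positivity
    push_cast
    field_simp
  have hzero : derivative (P - R) = 0 := by rw [derivative_sub, hdP, hdR, sub_self]
  have hCd : P - R = C ((P - R).eval 0) := by
    have h := Polynomial.eq_C_of_derivative_eq_zero hzero
    rw [h, Polynomial.eval_C]
  have heP : P.eval 0 = 0 := by
    rw [hP, Polynomial.eval_finset_sum]
    refine Finset.sum_eq_zero fun k hk => ?_
    rw [Polynomial.eval_smul, Polynomial.eval_pow, Polynomial.eval_X, zero_pow (by omega),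
      smul_zero]
  have heR : R.eval 0 = 0 := by
    rw [hR, Polynomial.eval_finset_sum]
    refine Finset.sum_eq_zero fun j hj => ?_
    rw [Polynomial.eval_smul, Polynomial.eval_sub, Polynomial.eval_pow, Polynomial.eval_add,
      Polynomial.eval_X, Polynomial.eval_C, Polynomial.eval_C, zero_add, sub_self, smul_zero]
  have : P - R = 0 := by
    rw [hCd, Polynomial.eval_sub, heP, heR, sub_self, map_zero]
  exact sub_eq_zero.mp this

lemma S_eq (n : ℕ) :
    ∑ k ∈ Finset.range (n+1), (n.choose k : ℚ)/(n+k+1) * _root_.bernoulli (n+k+1)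
    = ∑ j ∈ Finset.range (n+1),
        (n.choose j : ℚ) * (-1/4)^(n-j)/(2*j+1) * (0 - (1/2:ℚ)^(2*j+1)) := by
  have h := congrArg Ub (polyid n)
  rw [map_sum, map_sum] at h
  simp only [map_smul, smul_eq_mul, Ub_X_pow, map_sub, Ub_add_pow, Ub_C] at h
  rw [h]
  refine Finset.sum_congr rfl fun j hj => ?_
  rw [bernoulli_eval_half_odd j]

end Aux

theorem bernoulli_trinomial_identity (n : ℕ) (hn : 1 ≤ n) :
    (1 : ℚ) = (-1 : ℚ)^(n+1) * (4*n+2) *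
      ∑ k ∈ Finset.range (n+1),
        (((2*n).factorial : ℚ) / (n.factorial * k.factorial * (n-k).factorial))
          * (bernoulli (n+k+1) / (n+k+1)) := by
  have hfac : ∀ m : ℕ, ((m.factorial : ℚ)) ≠ 0 := fun m => by positivity
  -- rewrite trinomial coefficients
  have hsum : ∑ k ∈ Finset.range (n+1),
        (((2*n).factorial : ℚ) / (n.factorial * k.factorial * (n-k).factorial))
          * (bernoulli (n+k+1) / (n+k+1))
      = ((2*n).choose n : ℚ) *
        ∑ k ∈ Finset.range (n+1), (n.choose k : ℚ)/(n+k+1) * bernoulli (n+k+1) := by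
    rw [Finset.mul_sum]
    refine Finset.sum_congr rfl fun k hk => ?_
    rw [Finset.mem_range] at hk
    have hk' : k ≤ n := by omega
    have a1 : (2*n).choose n * n.factorial * (2*n - n).factorial = (2*n).factorial :=
      Nat.choose_mul_factorial_mul_factorial (by omega)
    have a2 : n.choose k * k.factorial * (n - k).factorial = n.factorial :=
      Nat.choose_mul_factorial_mul_factorial hk'
    have h2n : 2*n - n = n := by omega
    rw [h2n] at a1
    have a1' := congrArg (fun z : ℕ => (z : ℚ)) a1
    have a2' := congrArg (fun z : ℕ => (z : ℚ)) a2
    push_cast at a1' a2'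
    have hco : (((2*n).factorial : ℚ)) / (n.factorial * k.factorial * (n-k).factorial)
        = ((2*n).choose n : ℚ) * (n.choose k : ℚ) := by
      rw [div_eq_iff (by positivity)]
      linear_combination (-1 : ℚ) * a1'
        - ((2*n).choose n : ℚ) * (n.factorial : ℚ) * a2'
    rw [hco]
    ring
  rw [hsum, S_eq n]
  -- evaluate the j-sum via the Wallis sum
  have hj : ∑ j ∈ Finset.range (n+1),
        (n.choose j : ℚ) * (-1/4)^(n-j)/(2*j+1) * (0 - (1/2:ℚ)^(2*j+1))
      = (-(1/2) * (-1)^n / 4^n) *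
        ∑ j ∈ Finset.range (n+1), (n.choose j : ℚ) * (-1)^j / (2*j+1) := by
    rw [Finset.mul_sum]
    refine Finset.sum_congr rfl fun j hj => ?_
    rw [Finset.mem_range] at hj
    have hjn : j ≤ n := by omega
    have h1 : (-1:ℚ)^(n-j) * (-1)^j = (-1)^n := by rw [← pow_add, Nat.sub_add_cancel hjn]
    have hsq : (-1:ℚ)^j * (-1)^j = 1 := by
      rw [← pow_add, ← two_mul, pow_mul]; norm_num
    have hj1 : (-1:ℚ)^(n-j) = (-1)^n * (-1)^j := by
      linear_combination ((-1:ℚ)^j) * h1 - ((-1:ℚ)^(n-j)) * hsq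
    have h2 : (4:ℚ)^(n-j) * 4^j = 4^n := by rw [← pow_add, Nat.sub_add_cancel hjn]
    have h42 : (4:ℚ)^(n-j) = 4^n / 4^j := by
      rw [eq_div_iff (by positivity)]; exact h2
    have h3 : ((1:ℚ)/2)^(2*j+1) = 1/(2 * 4^j) := by
      rw [pow_succ, pow_mul, div_pow, div_pow]
      norm_num
    rw [div_pow, hj1, h42, h3]
    have hne : (2*(j:ℚ)+1) ≠ 0 := by positivity
    field_simp
    ring
  rw [hj, wallis_sum n]
  -- final numeric computation
  have hfc : ((2*n).choose n : ℚ) * (n.factorial : ℚ) * (n.factorial : ℚ)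
      = ((2*n).factorial : ℚ) := by
    have a1 : (2*n).choose n * n.factorial * (2*n - n).factorial = (2*n).factorial :=
      Nat.choose_mul_factorial_mul_factorial (by omega)
    have h2n : 2*n - n = n := by omega
    rw [h2n] at a1
    exact_mod_cast congrArg (fun z : ℕ => (z : ℚ)) a1
  have hf21 : ((2*n+1).factorial : ℚ) = (2*(n:ℚ)+1) * ((2*n).factorial : ℚ) := by
    rw [Nat.factorial_succ]; push_cast; ring
  have hsq : (-1:ℚ)^n * (-1)^n = 1 := by
    rw [← pow_add, ← two_mul, pow_mul]; norm_num
  rw [pow_succ, hf21]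
  have h4 : (4:ℚ)^n ≠ 0 := by positivity
  have hb : ((2*n).factorial : ℚ) ≠ 0 := hfac _
  field_simp
  linear_combination (-(4*(n:ℚ)+2) * ((2*n).choose n : ℚ) * (n.factorial : ℚ) *
      (n.factorial : ℚ)) * hsq + (-(4*(n:ℚ)+2)) * hfc
end

section
/- Define the infinite lower-triangular matrix M by M_{m,n} = 2·(-1)^{m+1}·C(2n-1, m)·C(2m+1, 2n) for m, n ≥ 1, where C denotes binomial coefficients. Then for every m ≥ 1, ∑_{n=1}^{m} M_{m,n} · B_{2n} = 1, where B_{2n} is the 2n-th Bernoulli number. -/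
/-- The infinite lower-triangular matrix `M_{m,n} = 2·(-1)^(m+1)·C(2n-1,m)·C(2m+1,2n)`. -/
def M (m n : ℕ) : ℚ :=
  2 * (-1)^(m+1) * (Nat.choose (2*n-1) m) * (Nat.choose (2*m+1) (2*n))

namespace MBernAux

open Finset Polynomial

lemma bern_odd (n : ℕ) (h : Odd n) (h1 : 1 < n) : _root_.bernoulli n = 0 := by
  rw [bernoulli_eq_bernoulli'_of_ne_one (by omega)]
  exact bernoulli'_eq_zero_of_odd h h1

lemma neg_one_pow_mul_bern (n : ℕ) (h2 : 2 ≤ n) :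
    ((-1 : ℚ))^n * _root_.bernoulli n = _root_.bernoulli n := by
  rcases Nat.even_or_odd n with h | h
  · rw [h.neg_one_pow, one_mul]
  · rw [bern_odd n h (by omega), mul_zero]

lemma sum_choose_bern (n : ℕ) :
    ∑ j ∈ range (n+1), (n.choose j : ℚ) * _root_.bernoulli j
      = _root_.bernoulli n + if n = 1 then 1 else 0 := by
  rw [Finset.sum_range_succ, _root_.sum_bernoulli, Nat.choose_self]
  push_cast
  ring

/-- The umbral evaluation map `∑ cₙ Xⁿ ↦ ∑ cₙ Bₙ`. -/
noncomputable def eB : Polynomial ℚ →ₗ[ℚ] ℚ :=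
  Polynomial.lsum (fun n => LinearMap.toSpanSingleton ℚ ℚ (_root_.bernoulli n))

lemma eB_monomial (n : ℕ) (a : ℚ) : eB (monomial n a) = a * _root_.bernoulli n := by
  rw [eB, Polynomial.lsum_apply, Polynomial.sum_monomial_index]
  · rw [LinearMap.toSpanSingleton_apply, smul_eq_mul]
  · rw [map_zero]

lemma eB_C (a : ℚ) : eB (C a) = a := by
  rw [← Polynomial.monomial_zero_left, eB_monomial, _root_.bernoulli_zero, mul_one]

lemma add_one_pow_eq (n : ℕ) :
    ((X + 1 : ℚ[X]))^n = ∑ j ∈ range (n+1), monomial j ((n.choose j : ℚ)) := by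
  rw [add_pow]
  refine Finset.sum_congr rfl fun j hj => ?_
  rw [one_pow, mul_one, mul_comm, ← map_natCast (C : ℚ →+* ℚ[X]) (n.choose j),
    C_mul_X_pow_eq_monomial]

lemma eB_add_one_pow (n : ℕ) :
    eB ((X + 1 : ℚ[X])^n) = _root_.bernoulli n + if n = 1 then 1 else 0 := by
  rw [add_one_pow_eq, map_sum]
  simpa [eB_monomial] using sum_choose_bern n

/-- `F = ∫₀ˣ tᵐ(1+t)ᵐ dt`. -/
noncomputable def Fp (m : ℕ) : ℚ[X] :=
  ∑ k ∈ range (m+1), monomial (m+k+1) ((m.choose k : ℚ) / ((m+k+1 : ℕ) : ℚ))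

/-- `G = ∫₀ˣ tᵐ(1-t)ᵐ dt`. -/
noncomputable def Gp (m : ℕ) : ℚ[X] :=
  ∑ k ∈ range (m+1), monomial (m+k+1) ((-1 : ℚ)^k * (m.choose k : ℚ) / ((m+k+1 : ℕ) : ℚ))

lemma cast_mk1_ne (m k : ℕ) : ((m+k+1 : ℕ) : ℚ) ≠ 0 :=
  Nat.cast_ne_zero.mpr (by omega)

lemma derivative_Fp (m : ℕ) :
    derivative (Fp m) = (X : ℚ[X])^m * (X+1)^m := by
  rw [Fp, derivative_sum, add_pow, Finset.mul_sum]
  refine Finset.sum_congr rfl fun k hk => ?_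
  rw [derivative_monomial, one_pow, mul_one,
    (show m+k+1-1 = m+k from by omega),
    (show ((m.choose k : ℚ) / ((m+k+1 : ℕ) : ℚ)) * ((m+k+1 : ℕ) : ℚ) = (m.choose k : ℚ)
      from div_mul_cancel₀ _ (cast_mk1_ne m k)),
    ← C_mul_X_pow_eq_monomial, map_natCast]
  ring

lemma derivative_Gp_comp (m : ℕ) :
    derivative ((Gp m).comp (X+1)) = (-1 : ℚ[X])^m * ((X : ℚ[X])^m * (X+1)^m) := by
  rw [derivative_comp, Gp, derivative_sum]
  have h1 : derivative ((X:ℚ[X]) + 1) = 1 := by simp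
  rw [h1, one_mul]
  have h2 : (∑ k ∈ range (m+1),
      derivative (monomial (m+k+1) ((-1 : ℚ)^k * (m.choose k : ℚ) / ((m+k+1 : ℕ) : ℚ)))).comp
        ((X:ℚ[X])+1)
      = ∑ k ∈ range (m+1), (-1:ℚ[X])^k * (m.choose k : ℚ[X]) * ((X:ℚ[X])+1)^(m+k) := by
    rw [Polynomial.sum_comp]
    refine Finset.sum_congr rfl fun k hk => ?_
    rw [derivative_monomial,
      (show (((-1 : ℚ)^k * (m.choose k : ℚ) / ((m+k+1 : ℕ) : ℚ)) * ((m+k+1 : ℕ) : ℚ))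
          = (-1:ℚ)^k * (m.choose k : ℚ)
        from div_mul_cancel₀ _ (cast_mk1_ne m k)),
      (show m+k+1-1 = m+k from by omega), monomial_comp, map_mul, map_pow, map_neg, map_one,
      map_natCast]
  rw [h2]
  have h3 : ((-X : ℚ[X]))^m * ((X:ℚ[X])+1)^m
      = ∑ k ∈ range (m+1), (-1:ℚ[X])^k * (m.choose k : ℚ[X]) * ((X:ℚ[X])+1)^(m+k) := by
    have h4 : (-X : ℚ[X]) = (-((X:ℚ[X])+1)) + 1 := by ring
    rw [h4, add_pow, Finset.sum_mul]
    refine Finset.sum_congr rfl fun k hk => ?_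
    rw [one_pow, mul_one, neg_pow]
    ring
  rw [← h3, neg_pow]
  ring

lemma poly_identity (m : ℕ) :
    Fp m = (-1:ℚ)^m • (Gp m).comp (X+1) - C ((-1:ℚ)^m * (Gp m).eval 1) := by
  have hd : derivative (Fp m - (-1:ℚ)^m • (Gp m).comp (X+1)) = 0 := by
    rw [map_sub, map_smul, derivative_Fp, derivative_Gp_comp, smul_eq_C_mul, map_pow, map_neg,
      map_one]
    have ht : ((-1:ℚ[X])^m) * ((-1:ℚ[X])^m) = 1 := by
      rw [← mul_pow]; norm_num
    linear_combination (-((X:ℚ[X])^m * ((X:ℚ[X])+1)^m)) * ht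
  have hc := Polynomial.eq_C_of_derivative_eq_zero hd
  have heval : (Fp m - (-1:ℚ)^m • (Gp m).comp (X+1)).coeff 0
      = -((-1:ℚ)^m * (Gp m).eval 1) := by
    rw [Polynomial.coeff_zero_eq_eval_zero, eval_sub, eval_smul, eval_comp]
    have hF0 : (Fp m).eval 0 = 0 := by
      rw [Fp, eval_finset_sum]
      refine Finset.sum_eq_zero fun k hk => ?_
      rw [eval_monomial, zero_pow (by omega), mul_zero]
    have h01 : ((X:ℚ[X]) + 1).eval 0 = 1 := by simp
    rw [hF0, h01, smul_eq_mul]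
    ring
  rw [heval] at hc
  rw [sub_eq_iff_eq_add] at hc
  rw [hc, map_neg]
  ring

lemma eB_Fp (m : ℕ) :
    eB (Fp m) = ∑ k ∈ range (m+1),
      (m.choose k : ℚ) / ((m+k+1 : ℕ) : ℚ) * _root_.bernoulli (m+k+1) := by
  rw [Fp, map_sum]
  exact Finset.sum_congr rfl fun k _ => eB_monomial _ _

lemma eB_Gp (m : ℕ) :
    eB (Gp m) = ∑ k ∈ range (m+1),
      (-1 : ℚ)^k * (m.choose k : ℚ) / ((m+k+1 : ℕ) : ℚ) * _root_.bernoulli (m+k+1) := by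
  rw [Gp, map_sum]
  exact Finset.sum_congr rfl fun k _ => eB_monomial _ _

lemma eB_Gp_comp (m : ℕ) (hm : 1 ≤ m) :
    eB ((Gp m).comp (X+1)) = eB (Gp m) := by
  rw [Gp, Polynomial.sum_comp, map_sum, map_sum]
  refine Finset.sum_congr rfl fun k hk => ?_
  rw [monomial_comp, ← smul_eq_C_mul, map_smul, eB_add_one_pow, eB_monomial,
    if_neg (by omega : ¬ m + k + 1 = 1), add_zero, smul_eq_mul]

lemma step1 (m : ℕ) (hm : 1 ≤ m) :
    eB (Fp m) = (-1:ℚ)^(m+1) * eB (Gp m) := by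
  rw [eB_Fp, eB_Gp, Finset.mul_sum]
  refine Finset.sum_congr rfl fun k hk => ?_
  have h := neg_one_pow_mul_bern (m+k+1) (by omega)
  have hp : (-1:ℚ)^(m+1) * (-1:ℚ)^k = (-1:ℚ)^(m+k+1) := by
    rw [← pow_add]
    congr 1
    omega
  linear_combination (-((m.choose k : ℚ) / ((m+k+1 : ℕ) : ℚ))) * h
    - (((m.choose k : ℚ) / ((m+k+1 : ℕ) : ℚ)) * _root_.bernoulli (m+k+1)) * hp

lemma step2 (m : ℕ) (hm : 1 ≤ m) :
    eB (Fp m) = (-1:ℚ)^m * (eB (Gp m) - (Gp m).eval 1) := by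
  rw [poly_identity m, map_sub, map_smul, eB_Gp_comp m hm, eB_C, smul_eq_mul]
  ring

lemma eB_Gp_eq_half (m : ℕ) (hm : 1 ≤ m) :
    eB (Gp m) = (Gp m).eval 1 / 2 := by
  have h1 := step1 m hm
  have h2 := step2 m hm
  have key : (-1:ℚ)^(m+1) * eB (Gp m) = (-1:ℚ)^m * (eB (Gp m) - (Gp m).eval 1) :=
    h1 ▸ h2
  have h5 : ((-1:ℚ))^m * ((Gp m).eval 1 - 2 * eB (Gp m)) = 0 := by
    rw [pow_succ] at key
    linear_combination key
  have hne : ((-1:ℚ))^m ≠ 0 := pow_ne_zero _ (by norm_num)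
  rcases mul_eq_zero.mp h5 with h | h
  · exact absurd h hne
  · linarith

lemma eB_Fp_eq (m : ℕ) (hm : 1 ≤ m) :
    eB (Fp m) = (-1:ℚ)^(m+1) * ((Gp m).eval 1 / 2) := by
  rw [step1 m hm, eB_Gp_eq_half m hm]

/-- `∑ (-1)^k C(n,k)/(a+k+1) = n! a! / (n+a+1)!`  (the Beta integral). -/
lemma betaSum_eq : ∀ n a : ℕ,
    (∑ k ∈ range (n+1), (-1 : ℚ)^k * (n.choose k : ℚ) / ((a+k+1 : ℕ) : ℚ))
      = (n.factorial : ℚ) * (a.factorial : ℚ) / ((n+a+1).factorial : ℚ)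
  | 0, a => by
    rw [Finset.sum_range_one, (show 0+a+1 = a+1 from by omega),
      (show a+0+1 = a+1 from by omega), Nat.factorial_succ]
    have h1 : ((a+1 : ℕ) : ℚ) ≠ 0 := Nat.cast_ne_zero.mpr (by omega)
    have h2 : ((a.factorial : ℕ) : ℚ) ≠ 0 := Nat.cast_ne_zero.mpr (Nat.factorial_ne_zero a)
    rw [Nat.choose_self]
    push_cast
    field_simp
    simp
  | (n+1), a => by
    have hrec : (∑ k ∈ range (n+2), (-1 : ℚ)^k * ((n+1).choose k : ℚ) / ((a+k+1 : ℕ) : ℚ))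
        = (∑ k ∈ range (n+1), (-1 : ℚ)^k * (n.choose k : ℚ) / ((a+k+1 : ℕ) : ℚ))
          - (∑ k ∈ range (n+1), (-1 : ℚ)^k * (n.choose k : ℚ) / (((a+1)+k+1 : ℕ) : ℚ)) := by
      rw [Finset.sum_range_succ'
        (fun k => (-1 : ℚ)^k * ((n+1).choose k : ℚ) / ((a+k+1 : ℕ) : ℚ)) (n+1)]
      have hA : ∑ k ∈ range (n+1),
            (-1 : ℚ)^(k+1) * ((n+1).choose (k+1) : ℚ) / ((a+(k+1)+1 : ℕ) : ℚ)
          = ∑ k ∈ range (n+1), (-((-1 : ℚ)^k * (n.choose k : ℚ) / (((a+1)+k+1 : ℕ) : ℚ))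
              - (-1 : ℚ)^k * (n.choose (k+1) : ℚ) / ((a+k+2 : ℕ) : ℚ)) := by
        refine Finset.sum_congr rfl fun k hk => ?_
        rw [Nat.choose_succ_succ,
          (show ((a+(k+1)+1 : ℕ) : ℚ) = (((a+1)+k+1 : ℕ) : ℚ) from congrArg (Nat.cast : ℕ → ℚ) (by omega)),
          (show ((a+k+2 : ℕ) : ℚ) = (((a+1)+k+1 : ℕ) : ℚ) from congrArg (Nat.cast : ℕ → ℚ) (by omega))]
        push_cast
        ring
      rw [hA, Finset.sum_sub_distrib, Finset.sum_neg_distrib]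
      have hB : ∑ k ∈ range (n+1), (-1 : ℚ)^k * (n.choose (k+1) : ℚ) / ((a+k+2 : ℕ) : ℚ)
          = -(∑ k ∈ range (n+1), (-1 : ℚ)^k * (n.choose k : ℚ) / ((a+k+1 : ℕ) : ℚ))
            + (-1:ℚ)^0 * (n.choose 0 : ℚ) / ((a+0+1 : ℕ) : ℚ) := by
        have hC : ∑ k ∈ range (n+1), (-1 : ℚ)^k * (n.choose (k+1) : ℚ) / ((a+k+2 : ℕ) : ℚ)
            = ∑ k ∈ range (n+1),
                (-((-1 : ℚ)^(k+1) * (n.choose (k+1) : ℚ) / ((a+(k+1)+1 : ℕ) : ℚ))) := by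
          refine Finset.sum_congr rfl fun k hk => ?_
          rw [(show ((a+k+2 : ℕ) : ℚ) = ((a+(k+1)+1 : ℕ) : ℚ) from congrArg (Nat.cast : ℕ → ℚ) (by omega))]
          ring
        rw [hC, Finset.sum_neg_distrib,
          Finset.sum_range_succ'
            (fun k => (-1 : ℚ)^k * (n.choose k : ℚ) / ((a+k+1 : ℕ) : ℚ)) n]
        have hz : (-1 : ℚ)^(n+1) * (n.choose (n+1) : ℚ) / ((a+(n+1)+1 : ℕ) : ℚ) = 0 := by
          rw [Nat.choose_succ_self]
          simp
        rw [Finset.sum_range_succ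
          (fun k => (-1 : ℚ)^(k+1) * (n.choose (k+1) : ℚ) / ((a+(k+1)+1 : ℕ) : ℚ)) n, hz]
        ring
      rw [hB, Nat.choose_zero_right, Nat.choose_zero_right]
      push_cast
      ring
    rw [hrec, betaSum_eq n a, betaSum_eq n (a+1)]
    have h1 : ((n+1+a+1).factorial : ℚ) = ((n+a+2 : ℕ) : ℚ) * ((n+a+1).factorial : ℚ) := by
      rw [(show n+1+a+1 = (n+a+1) + 1 from by omega), Nat.factorial_succ]
      push_cast
      ring
    have h2 : ((n+(a+1)+1).factorial : ℚ) = ((n+a+2 : ℕ) : ℚ) * ((n+a+1).factorial : ℚ) := by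
      rw [(show n+(a+1)+1 = (n+a+1) + 1 from by omega), Nat.factorial_succ]
      push_cast
      ring
    have h3 : ((a+1).factorial : ℚ) = ((a+1 : ℕ) : ℚ) * (a.factorial : ℚ) := by
      rw [Nat.factorial_succ]
      push_cast
      ring
    have h4 : ((n+1).factorial : ℚ) = ((n+1 : ℕ) : ℚ) * (n.factorial : ℚ) := by
      rw [Nat.factorial_succ]
      push_cast
      ring
    rw [h1, h2, h3, h4]
    have hfne : ((n+a+1).factorial : ℚ) ≠ 0 := Nat.cast_ne_zero.mpr (Nat.factorial_ne_zero _)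
    have hcne : ((n+a+2 : ℕ) : ℚ) ≠ 0 := Nat.cast_ne_zero.mpr (by omega)
    field_simp
    push_cast
    ring

lemma Gp_eval_one (m : ℕ) :
    (Gp m).eval 1 = (m.factorial : ℚ) * (m.factorial : ℚ) / ((2*m+1).factorial : ℚ) := by
  have h : (Gp m).eval 1
      = ∑ k ∈ range (m+1), (-1 : ℚ)^k * (m.choose k : ℚ) / ((m+k+1 : ℕ) : ℚ) := by
    rw [Gp, eval_finset_sum]
    refine Finset.sum_congr rfl fun k _ => ?_
    rw [eval_monomial, one_pow, mul_one]
  rw [h, betaSum_eq m m, (show m+m+1 = 2*m+1 from by omega)]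

lemma key_binom (m k : ℕ) (hk : k ≤ m) :
    (((2*m+1).choose (m+k+1) : ℕ) : ℚ) * (((m+k).choose m : ℕ) : ℚ)
      = ((2*m+1 : ℕ) : ℚ) * (((2*m).choose m : ℕ) : ℚ)
        * ((m.choose k : ℚ) / ((m+k+1 : ℕ) : ℚ)) := by
  rw [mul_div_assoc']
  rw [eq_div_iff (cast_mk1_ne m k)]
  have hnat : (2*m+1).choose (m+k+1) * ((m+k).choose m) * (m+k+1)
      = (2*m+1) * ((2*m).choose m) * m.choose k := by
    have h1 : (2*m).succ * (2*m).choose (m+k) = (2*m+1).choose (m+k+1) * (m+k+1) :=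
      Nat.add_one_mul_choose_eq (2*m) (m+k)
    have h2 : (2*m).choose (m+k) * ((m+k).choose m)
        = (2*m).choose m * ((2*m-m).choose (m+k-m)) :=
      Nat.choose_mul (by omega)
    rw [(show 2*m - m = m from by omega), (show m+k-m = k from by omega)] at h2
    calc (2*m+1).choose (m+k+1) * ((m+k).choose m) * (m+k+1)
        = ((2*m+1).choose (m+k+1) * (m+k+1)) * ((m+k).choose m) := by ring
      _ = ((2*m).succ * (2*m).choose (m+k)) * ((m+k).choose m) := by rw [h1]
      _ = (2*m+1) * ((2*m).choose (m+k) * ((m+k).choose m)) := by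
          rw [Nat.succ_eq_add_one]; ring
      _ = (2*m+1) * ((2*m).choose m) * m.choose k := by rw [h2]; ring
  calc (((2*m+1).choose (m+k+1) : ℕ) : ℚ) * (((m+k).choose m : ℕ) : ℚ) * ((m+k+1 : ℕ) : ℚ)
      = (((2*m+1).choose (m+k+1) * ((m+k).choose m) * (m+k+1) : ℕ) : ℚ) := by push_cast; ring
    _ = (((2*m+1) * ((2*m).choose m) * m.choose k : ℕ) : ℚ) := by rw [hnat]
    _ = _ := by push_cast; ring

lemma sum_range_double (N : ℕ) (f : ℕ → ℚ) :
    ∑ j ∈ range (2*N), f j = ∑ i ∈ range N, (f (2*i) + f (2*i+1)) := by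
  induction N with
  | zero => simp
  | succ n ih =>
    rw [(show 2 * (n+1) = (2*n+1)+1 from by omega), Finset.sum_range_succ,
      Finset.sum_range_succ, Finset.sum_range_succ, ← ih]
    ring

lemma sum_range_split (a b : ℕ) (f : ℕ → ℚ) :
    ∑ j ∈ range (a+b), f j = ∑ j ∈ range a, f j + ∑ k ∈ range b, f (a+k) := by
  induction b with
  | zero => simp
  | succ n ih =>
    rw [(show a + (n+1) = (a+n)+1 from by omega), Finset.sum_range_succ, ih,
      Finset.sum_range_succ]
    ring

end MBernAux

open MBernAux Finset in
theorem matrix_bernoulli_identity (m : ℕ) (hm : 1 ≤ m) :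
    ∑ n ∈ Finset.Icc 1 m, M m n * bernoulli (2*n) = 1 := by
  classical
  set c : ℕ → ℚ := fun j =>
    2 * (-1)^(m+1) * (Nat.choose (j-1) m : ℚ) * (Nat.choose (2*m+1) j : ℚ) * bernoulli j with hc
  -- Step A: extend to range (m+1)
  have hA : ∑ n ∈ Finset.Icc 1 m, M m n * bernoulli (2*n)
      = ∑ n ∈ range (m+1), c (2*n) := by
    have hins : range (m+1) = insert 0 (Finset.Icc 1 m) := by
      ext x
      simp only [Finset.mem_range, Finset.mem_insert, Finset.mem_Icc]
      omega
    rw [hins, Finset.sum_insert (by simp)]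
    have hc0 : c (2*0) = 0 := by
      simp only [hc]
      rw [(show 2*0-1 = 0 from by omega), Nat.choose_eq_zero_of_lt (by omega : 0 < m)]
      push_cast
      ring
    rw [hc0, zero_add]
    refine Finset.sum_congr rfl fun n hn => ?_
    simp only [hc, M]
  -- Step B: odd terms vanish
  have hB : ∑ j ∈ range (2*(m+1)), c j = ∑ n ∈ range (m+1), c (2*n) := by
    rw [sum_range_double]
    refine Finset.sum_congr rfl fun i _ => ?_
    have hodd : c (2*i+1) = 0 := by
      rcases Nat.eq_zero_or_pos i with h0 | hpos
      · subst h0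
        simp only [hc]
        rw [(show 2*0+1-1 = 0 from by omega), Nat.choose_eq_zero_of_lt (by omega : 0 < m)]
        push_cast
        ring
      · simp only [hc]
        rw [bern_odd (2*i+1) ⟨i, by omega⟩ (by omega)]
        ring
    rw [hodd, add_zero]
  -- Step C: first half of range vanishes
  have hC : ∑ j ∈ range (2*(m+1)), c j = ∑ k ∈ range (m+1), c (m+1+k) := by
    rw [(show 2*(m+1) = (m+1) + (m+1) from by omega), sum_range_split]
    have hz : ∑ j ∈ range (m+1), c j = 0 := by
      refine Finset.sum_eq_zero fun j hj => ?_
      simp only [Finset.mem_range] at hj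
      simp only [hc]
      rw [Nat.choose_eq_zero_of_lt (by omega : j - 1 < m)]
      push_cast
      ring
    rw [hz, zero_add]
  -- Step D: rewrite the tail via key_binom and eB (Fp m)
  have hD : ∑ k ∈ range (m+1), c (m+1+k)
      = 2 * (-1:ℚ)^(m+1) * ((2*m+1 : ℕ) : ℚ) * (((2*m).choose m : ℕ) : ℚ) * eB (Fp m) := by
    rw [eB_Fp, Finset.mul_sum]
    refine Finset.sum_congr rfl fun k hk => ?_
    simp only [Finset.mem_range] at hk
    have hk' : k ≤ m := by omega
    simp only [hc]
    rw [(show m+1+k-1 = m+k from by omega), (show m+1+k = m+k+1 from by omega)]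
    have hb := key_binom m k hk'
    calc 2 * (-1:ℚ)^(m+1) * ((m+k).choose m : ℚ) * ((2*m+1).choose (m+k+1) : ℚ)
          * bernoulli (m+k+1)
        = 2 * (-1:ℚ)^(m+1) * (((2*m+1).choose (m+k+1) : ℚ) * ((m+k).choose m : ℚ))
          * bernoulli (m+k+1) := by ring
      _ = 2 * (-1:ℚ)^(m+1) * (((2*m+1 : ℕ) : ℚ) * (((2*m).choose m : ℕ) : ℚ)
          * ((m.choose k : ℚ) / ((m+k+1 : ℕ) : ℚ))) * bernoulli (m+k+1) := by rw [hb]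
      _ = _ := by ring
  -- Combine
  rw [hA, ← hB, hC, hD, eB_Fp_eq m hm, Gp_eval_one m]
  have hsq : ((-1:ℚ))^(m+1) * ((-1:ℚ))^(m+1) = 1 := by
    rw [← mul_pow]
    norm_num
  have hfact : ((2*m+1).factorial : ℚ)
      = ((2*m+1 : ℕ) : ℚ) * (((2*m).choose m : ℕ) : ℚ) * (m.factorial : ℚ)
        * (m.factorial : ℚ) := by
    have h1 : (2*m).choose m * m.factorial * (2*m - m).factorial = (2*m).factorial :=
      Nat.choose_mul_factorial_mul_factorial (by omega)
    rw [(show 2*m - m = m from by omega)] at h1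
    rw [(show (2*m+1).factorial = (2*m+1) * (2*m).factorial from Nat.factorial_succ (2*m)),
      ← h1]
    push_cast
    ring
  rw [hfact]
  have hne1 : ((2*m+1 : ℕ) : ℚ) ≠ 0 := Nat.cast_ne_zero.mpr (by omega)
  have hne2 : (((2*m).choose m : ℕ) : ℚ) ≠ 0 :=
    Nat.cast_ne_zero.mpr (Nat.choose_pos (by omega : m ≤ 2*m)).ne'
  have hne3 : ((m.factorial : ℕ) : ℚ) ≠ 0 := Nat.cast_ne_zero.mpr (Nat.factorial_ne_zero m)
  have hsq' : ((-1:ℚ))^(m*2) = 1 := by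
    rw [pow_mul']
    norm_num
  field_simp
  linear_combination (((2*m+1 : ℕ) : ℚ) * (((2*m).choose m : ℕ) : ℚ)
    * (m.factorial : ℚ) * (m.factorial : ℚ)) * hsq
    + ((m:ℚ) * (((2*m).choose m : ℕ) : ℚ) * (m.factorial : ℚ)^2 * 4
      - (((2*m).choose m : ℕ) : ℚ) * (m.factorial : ℚ)^2 * ((2*m+1 : ℕ) : ℚ)
      + (((2*m).choose m : ℕ) : ℚ) * (m.factorial : ℚ)^2 * 2) * hsq'
    + (1 - 2 * (((2*m).choose m : ℕ) : ℚ) * (m.factorial : ℚ)^2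
      - 4 * (((2*m).choose m : ℕ) : ℚ) * (m.factorial : ℚ)^2 * (m:ℚ)) * hsq'
end

section
/- Define polynomials p_n(x) for n ≥ 2 by p_n(x) = (1/(4n²-1)) · ∑_{k=0}^{⌊n/2⌋-1} ((-4)^k x^{k+1}/(2k+1)!) · (Γ(n-1)Γ(2n-2-2k))/(Γ(n-1-2k)Γ(2n-2)), and set p_1(x) = 0. Then for all n ≥ 3, (2n+1)·p_n(x) = (2n-3)·p_{n-1}(x) - (x/(2n-1))·p_{n-2}(x). -/
set_option maxHeartbeats 1000000

private lemma desc_ne (m k : ℕ) (h : k ≤ m) : ((Nat.descFactorial m k : ℝ)) ≠ 0 := by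
  exact_mod_cast fun hz => absurd (Nat.descFactorial_eq_zero_iff_lt.mp (by exact_mod_cast hz)) (by omega)

private lemma termwise (a j : ℕ) (ha : 2*j+1 ≤ a) (x : ℝ) :
    ((-4:ℝ)^(j+1) * x^((j+1)+1) / ((2*(j+1)+1).factorial : ℝ)) *
        ((Nat.descFactorial (a+1) (2*(j+1)) : ℝ) / (Nat.descFactorial (2*a+3) (2*(j+1)) : ℝ))
    = ((-4:ℝ)^(j+1) * x^((j+1)+1) / ((2*(j+1)+1).factorial : ℝ)) *
        ((Nat.descFactorial a (2*(j+1)) : ℝ) / (Nat.descFactorial (2*a+1) (2*(j+1)) : ℝ))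
      - (x / ((2*(a:ℝ)+3) * (2*(a:ℝ)+1))) *
        (((-4:ℝ)^j * x^(j+1) / ((2*j+1).factorial : ℝ)) *
          ((Nat.descFactorial (a-1) (2*j) : ℝ) / (Nat.descFactorial (2*a-1) (2*j) : ℝ))) := by
  obtain ⟨b, rfl⟩ : ∃ b, a = b + 1 := ⟨a - 1, by omega⟩
  have hb : 2*j ≤ b := by omega
  set F : ℝ := (Nat.descFactorial b (2*j) : ℝ) with hF
  set G : ℝ := (Nat.descFactorial (2*b+1) (2*j) : ℝ) with hG
  set P : ℝ := (Nat.descFactorial (2*b+3) (2*j) : ℝ) with hP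
  have hGne : G ≠ 0 := desc_ne _ _ (by omega)
  have hPne : P ≠ 0 := desc_ne _ _ (by omega)
  have hA : (Nat.descFactorial (b+1+1) (2*(j+1)) : ℝ) = ((b:ℝ)+2) * ((b:ℝ)+1) * F := by
    have : Nat.descFactorial (b+2) (2*j+2) = (b+2) * ((b+1) * Nat.descFactorial b (2*j)) := by
      rw [show 2*j+2 = (2*j+1)+1 from rfl, Nat.succ_descFactorial_succ, Nat.succ_descFactorial_succ]
    rw [show 2*(j+1) = 2*j+2 by ring, show b+1+1 = b+2 from rfl, this]
    push_cast; ring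
  have hC : (Nat.descFactorial (b+1) (2*(j+1)) : ℝ) = ((b:ℝ)+1) * ((b:ℝ) - 2*j) * F := by
    have : Nat.descFactorial (b+1) (2*j+2) = (b+1) * ((b - 2*j) * Nat.descFactorial b (2*j)) := by
      rw [show 2*j+2 = (2*j+1)+1 from rfl, Nat.succ_descFactorial_succ, Nat.descFactorial_succ]
    rw [show 2*(j+1) = 2*j+2 by ring, this]
    push_cast [Nat.cast_sub hb]; ring
  have hB : (Nat.descFactorial (2*(b+1)+3) (2*(j+1)) : ℝ) = (2*(b:ℝ)+5) * (2*(b:ℝ)+4) * P := by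
    have : Nat.descFactorial (2*b+5) (2*j+2) = (2*b+5) * ((2*b+4) * Nat.descFactorial (2*b+3) (2*j)) := by
      rw [show 2*j+2 = (2*j+1)+1 from rfl, show 2*b+5 = (2*b+4)+1 from rfl,
        show 2*b+4 = (2*b+3)+1 from rfl, Nat.succ_descFactorial_succ, Nat.succ_descFactorial_succ]
    rw [show 2*(j+1) = 2*j+2 by ring, show 2*(b+1)+3 = 2*b+5 by ring, this]
    push_cast; ring
  have hE : (Nat.descFactorial (2*(b+1)+1) (2*(j+1)) : ℝ) = (2*(b:ℝ)+3) * (2*(b:ℝ)+2) * G := by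
    have : Nat.descFactorial (2*b+3) (2*j+2) = (2*b+3) * ((2*b+2) * Nat.descFactorial (2*b+1) (2*j)) := by
      rw [show 2*j+2 = (2*j+1)+1 from rfl, show 2*b+3 = (2*b+2)+1 from rfl,
        show 2*b+2 = (2*b+1)+1 from rfl, Nat.succ_descFactorial_succ, Nat.succ_descFactorial_succ]
    rw [show 2*(j+1) = 2*j+2 by ring, show 2*(b+1)+1 = 2*b+3 by ring, this]
    push_cast; ring
  have hPG : P * ((2*(b:ℝ)+3-2*j) * (2*(b:ℝ)+2-2*j)) = (2*(b:ℝ)+3) * (2*(b:ℝ)+2) * G := by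
    have h1 : Nat.descFactorial (2*b+3) (2*j+2) = (2*b+2-2*j) * ((2*b+3-2*j) * Nat.descFactorial (2*b+3) (2*j)) := by
      rw [show 2*j+2 = (2*j+1)+1 from rfl, Nat.descFactorial_succ, Nat.descFactorial_succ]
      congr 1; omega
    have h2 : Nat.descFactorial (2*b+3) (2*j+2) = (2*b+3) * ((2*b+2) * Nat.descFactorial (2*b+1) (2*j)) := by
      rw [show 2*j+2 = (2*j+1)+1 from rfl, show 2*b+3 = (2*b+2)+1 from rfl,
        show 2*b+2 = (2*b+1)+1 from rfl, Nat.succ_descFactorial_succ, Nat.succ_descFactorial_succ]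
    have := h1.symm.trans h2
    have := congrArg (fun t : ℕ => (t : ℝ)) this
    push_cast [Nat.cast_sub (show 2*j ≤ 2*b+2 by omega), Nat.cast_sub (show 2*j ≤ 2*b+3 by omega)] at this
    rw [hP, hG]; linarith [this]
  have hfact : ((2*(j+1)+1).factorial : ℝ) = (2*(j:ℝ)+3) * (2*(j:ℝ)+2) * ((2*j+1).factorial : ℝ) := by
    rw [show 2*(j+1)+1 = (2*j+2)+1 from rfl, Nat.factorial_succ, show 2*j+2 = (2*j+1)+1 from rfl,
      Nat.factorial_succ]
    push_cast; ring
  have hfne : ((2*j+1).factorial : ℝ) ≠ 0 := by positivity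
  rw [hA, hB, hC, hE, hfact]
  rw [show ((b:ℕ)+1-1 : ℕ) = b from rfl, show (2*(b+1)-1 : ℕ) = 2*b+1 by omega]
  have hPval : P = (2*(b:ℝ)+3) * (2*(b:ℝ)+2) * G / ((2*(b:ℝ)+3-2*j) * (2*(b:ℝ)+2-2*j)) := by
    rw [eq_div_iff (by nlinarith [show (2*(j:ℝ)) ≤ (b:ℝ) from by exact_mod_cast hb])]
    exact hPG
  rw [hPval]
  rw [← hF, ← hG]
  have h1 : (2*(b:ℝ)+3-2*j) ≠ 0 := by
    have : (2*(j:ℝ)) ≤ (b:ℝ) := by exact_mod_cast hb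
    nlinarith
  have h2 : (2*(b:ℝ)+2-2*j) ≠ 0 := by
    have : (2*(j:ℝ)) ≤ (b:ℝ) := by exact_mod_cast hb
    nlinarith
  push_cast
  field_simp
  ring

/-- The polynomials `p_n(x)` in closed form:
`p_n(x) = (1/(4n²-1)) ∑_{k=0}^{⌊n/2⌋-1} ((-4)^k x^(k+1)/(2k+1)!) ·
  Γ(n-1)Γ(2n-2-2k)/(Γ(n-1-2k)Γ(2n-2))`,
where the ratio `Γ(n-1)/Γ(n-1-2k)` is the falling factorial `(n-2)(n-3)⋯(n-1-2k)`
(which vanishes when `n-1-2k ≤ 0`), and similarly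
`Γ(2n-2-2k)/Γ(2n-2) = 1/((2n-3)(2n-4)⋯(2n-2-2k))`.  Note `p_1(x) = 0` (empty sum). -/
noncomputable def p (n : ℕ) (x : ℝ) : ℝ :=
  (1 / (4*(n : ℝ)^2 - 1)) *
    ∑ k ∈ Finset.range (n / 2),
      ((-4 : ℝ)^k * x^(k+1) / ((2*k+1).factorial : ℝ)) *
        ((Nat.descFactorial (n-2) (2*k) : ℝ) / (Nat.descFactorial (2*n-3) (2*k) : ℝ))

theorem p_recurrence (n : ℕ) (hn : 3 ≤ n) (x : ℝ) :
    (2*(n : ℝ)+1) * p n x = (2*(n : ℝ)-3) * p (n-1) x - (x / (2*(n : ℝ)-1)) * p (n-2) x := by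
  obtain ⟨a, rfl⟩ : ∃ a, n = a + 3 := ⟨n - 3, by omega⟩
  clear hn
  simp only [p, show a+3-1 = a+2 from rfl, show a+3-2 = a+1 from rfl,
    show a+2-2 = a from rfl, show a+1-2 = a-1 from rfl,
    show 2*(a+3)-3 = 2*a+3 by omega, show 2*(a+2)-3 = 2*a+1 by omega,
    show 2*(a+1)-3 = 2*a-1 by omega]
  set s3 : ℝ := ∑ k ∈ Finset.range ((a+3)/2),
      ((-4 : ℝ)^k * x^(k+1) / ((2*k+1).factorial : ℝ)) *
        ((Nat.descFactorial (a+1) (2*k) : ℝ) / (Nat.descFactorial (2*a+3) (2*k) : ℝ)) with hs3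
  set s2 : ℝ := ∑ k ∈ Finset.range ((a+2)/2),
      ((-4 : ℝ)^k * x^(k+1) / ((2*k+1).factorial : ℝ)) *
        ((Nat.descFactorial a (2*k) : ℝ) / (Nat.descFactorial (2*a+1) (2*k) : ℝ)) with hs2
  set s1 : ℝ := ∑ k ∈ Finset.range ((a+1)/2),
      ((-4 : ℝ)^k * x^(k+1) / ((2*k+1).factorial : ℝ)) *
        ((Nat.descFactorial (a-1) (2*k) : ℝ) / (Nat.descFactorial (2*a-1) (2*k) : ℝ)) with hs1
  have key : s3 = s2 - (x / ((2*(a:ℝ)+3) * (2*(a:ℝ)+1))) * s1 := by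
    have hpad : s2 = ∑ k ∈ Finset.range ((a+1)/2+1),
        ((-4 : ℝ)^k * x^(k+1) / ((2*k+1).factorial : ℝ)) *
          ((Nat.descFactorial a (2*k) : ℝ) / (Nat.descFactorial (2*a+1) (2*k) : ℝ)) := by
      rw [hs2]
      apply Finset.sum_subset (Finset.range_subset_range.mpr (by omega))
      intro k hk hk'
      simp only [Finset.mem_range] at hk hk'
      rw [Nat.descFactorial_eq_zero_iff_lt.mpr (show a < 2*k by omega)]
      simp
    rw [hs3, hs1, hpad, show (a+3)/2 = (a+1)/2+1 by omega, Finset.sum_range_succ',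
      Finset.sum_range_succ', Finset.mul_sum]
    have hterm : ∑ j ∈ Finset.range ((a+1)/2),
        ((-4 : ℝ)^(j+1) * x^((j+1)+1) / ((2*(j+1)+1).factorial : ℝ)) *
          ((Nat.descFactorial (a+1) (2*(j+1)) : ℝ) / (Nat.descFactorial (2*a+3) (2*(j+1)) : ℝ))
        = ∑ j ∈ Finset.range ((a+1)/2),
          (((-4 : ℝ)^(j+1) * x^((j+1)+1) / ((2*(j+1)+1).factorial : ℝ)) *
            ((Nat.descFactorial a (2*(j+1)) : ℝ) / (Nat.descFactorial (2*a+1) (2*(j+1)) : ℝ))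
          - (x / ((2*(a:ℝ)+3) * (2*(a:ℝ)+1))) *
            (((-4:ℝ)^j * x^(j+1) / ((2*j+1).factorial : ℝ)) *
              ((Nat.descFactorial (a-1) (2*j) : ℝ) / (Nat.descFactorial (2*a-1) (2*j) : ℝ)))) := by
      refine Finset.sum_congr rfl fun j hj => ?_
      simp only [Finset.mem_range] at hj
      exact termwise a j (by omega) x
    rw [hterm, Finset.sum_sub_distrib]
    simp only [pow_zero, Nat.descFactorial_zero, Nat.cast_one, mul_zero]
    ring
  rw [key]
  have c0 : (0:ℝ) ≤ (a:ℝ) := Nat.cast_nonneg a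
  have d3 : (4*((a:ℝ)+3)^2 - 1) ≠ 0 := by nlinarith
  have d2 : (4*((a:ℝ)+2)^2 - 1) ≠ 0 := by nlinarith
  have d1 : (4*((a:ℝ)+1)^2 - 1) ≠ 0 := by nlinarith
  have d4 : (2*((a:ℝ)+3) - 1) ≠ 0 := by nlinarith
  push_cast
  field_simp
  rw [div_eq_iff (by nlinarith)]
  ring
end

section
/- For n ≥ 2, p_n(π²) = (π/√2)·(n!/(2n+1)!)·(2π)^n·J_{n-1/2}(π), where p_n is given by p_n(x) = (1/(4n²-1))·∑_{k=0}^{⌊n/2⌋-1} ((-4)^k x^{k+1}/(2k+1)!)·((n-2)! (2n-3-2k)!)/((n-2-2k)! (2n-3)!) and J_ν is the Bessel function of the first kind. -/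
open Real

/-- The Bessel function of the first kind `J_ν(z)` (for `z > 0`), defined by its power series
`J_ν(z) = ∑_{m=0}^∞ (-1)^m / (m! Γ(m+ν+1)) (z/2)^(2m+ν)`. -/
noncomputable def besselJ (ν : ℝ) (z : ℝ) : ℝ :=
  ∑' m : ℕ, (-1 : ℝ)^m / ((m.factorial : ℝ) * Real.Gamma ((m : ℝ) + ν + 1)) *
    (z/2) ^ ((2*(m : ℝ) + ν))

/-! ### auxiliary -/

theorem gamma_half (n : ℕ) :
    Real.Gamma ((n:ℝ) + 1/2) = Real.sqrt π * (2*n).factorial / (4^n * n.factorial) := by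
  induction n with
  | zero => simpa using Real.Gamma_one_half_eq
  | succ n ih =>
    have h : ((n:ℕ)+1 :ℝ) + 1/2 = ((n:ℝ)+1/2) + 1 := by ring
    rw [show ((n+1:ℕ):ℝ) = ((n:ℝ)+1) by push_cast; ring, h,
      Real.Gamma_add_one (by positivity), ih]
    have h2 : ((2*(n+1)).factorial : ℝ) = (2*n+2)*((2*n+1) * (2*n).factorial) := by
      rw [show 2*(n+1) = (2*n+1)+1 by ring, Nat.factorial_succ, Nat.factorial_succ]
      push_cast; ring
    have h3 : ((n+1).factorial : ℝ) = (n+1) * n.factorial := by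
      rw [Nat.factorial_succ]; push_cast; ring
    rw [h2, h3]
    have h4 : ((n.factorial : ℝ)) ≠ 0 := by positivity
    field_simp
    ring

/-- summand of the auxiliary series -/
noncomputable def uaux (n m : ℕ) : ℝ :=
  ((-1:ℝ)^m * ((m+n).factorial : ℝ) * π^(2*m)) /
    ((m.factorial : ℝ) * ((2*m+2*n).factorial : ℝ))

noncomputable def u (n : ℕ) : ℝ := ∑' m, uaux n m

theorem summable_uaux (n : ℕ) : Summable (uaux n) := by
  have h : ∀ m, |uaux n m| ≤ (π^2)^m / (m.factorial : ℝ) := by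
    intro m
    have h1 : (0:ℝ) < m.factorial := by positivity
    have h2 : (0:ℝ) < (2*m+2*n).factorial := by positivity
    have h3 : ((m+n).factorial : ℝ) ≤ ((2*m+2*n).factorial : ℝ) := by
      exact_mod_cast Nat.factorial_le (by omega)
    rw [uaux, abs_div, abs_mul, abs_mul, abs_pow, abs_neg, abs_one, one_pow, one_mul,
      abs_of_nonneg (by positivity : (0:ℝ) ≤ ((m+n).factorial:ℝ)),
      abs_of_nonneg (by positivity : (0:ℝ) ≤ π^(2*m)),
      abs_of_nonneg (by positivity : (0:ℝ) ≤ (m.factorial:ℝ) * ((2*m+2*n).factorial:ℝ))]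
    rw [div_le_div_iff₀ (by positivity) h1]
    calc ((m+n).factorial : ℝ) * π^(2*m) * (m.factorial:ℝ)
        ≤ ((2*m+2*n).factorial : ℝ) * π^(2*m) * (m.factorial:ℝ) := by
          apply mul_le_mul_of_nonneg_right (mul_le_mul_of_nonneg_right h3 (by positivity))
            (by positivity)
      _ = (π^2)^m * ((m.factorial:ℝ) * ((2*m+2*n).factorial:ℝ)) := by rw [← pow_mul]; ring
  have hs : Summable (fun m : ℕ => (π^2)^m / (m.factorial : ℝ)) :=
    Real.summable_pow_div_factorial (π^2)
  exact (Summable.of_nonneg_of_le (fun m => abs_nonneg _) h hs).of_abs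

theorem u_zero : u 0 = -1 := by
  have : u 0 = Real.cos π := by
    rw [Real.cos_eq_tsum, u]
    apply tsum_congr
    intro m
    rw [uaux]
    have h0 : (0:ℝ) < (2*m).factorial := by positivity
    field_simp
    ring
  rw [this, Real.cos_pi]

theorem u_one : u 1 = 0 := by
  have h : 2 * π * u 1 = Real.sin π := by
    rw [Real.sin_eq_tsum, u, ← tsum_mul_left]
    apply tsum_congr
    intro m
    rw [uaux]
    have e1 : (2*m+2*1).factorial = (2*m+2)*((2*m+1).factorial) := by
      rw [show 2*m+2*1 = (2*m+1)+1 by ring, Nat.factorial_succ]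
    have e2 : (m+1).factorial = (m+1) * m.factorial := Nat.factorial_succ m
    rw [e1, e2]
    have h1 : (0:ℝ) < m.factorial := by positivity
    have h2 : (0:ℝ) < (2*m+1).factorial := by positivity
    push_cast
    rw [pow_succ]
    field_simp
  have hπ : (2:ℝ) * π ≠ 0 := by positivity
  have := Real.sin_pi
  rw [this] at h
  exact (mul_eq_zero.mp h).resolve_left hπ

theorem u_rec (n : ℕ) : (2*(n:ℝ)+1) * u (n+1) = 2*π^2 * u (n+2) + u n / 2 := by
  classical
  set v : ℕ → ℝ := fun m => Nat.casesOn m 0 (fun m' => 2*π^2 * uaux (n+2) m') with hv_def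
  have hterm : ∀ m, (2*(n:ℝ)+1) * uaux (n+1) m - uaux n m / 2 = v m := by
    intro m
    match m with
    | 0 =>
      show (2*(n:ℝ)+1) * uaux (n+1) 0 - uaux n 0 / 2 = 0
      simp only [uaux]
      have e1 : ((0+(n+1)).factorial : ℝ) = (n+1) * (n.factorial) := by
        rw [show 0+(n+1) = n+1 by omega, Nat.factorial_succ]; push_cast; ring
      have e2 : ((2*0+2*(n+1)).factorial : ℝ) = (2*n+2)*(2*n+1)*((2*n).factorial) := by
        rw [show 2*0+2*(n+1) = ((2*n)+1)+1 by omega, Nat.factorial_succ, Nat.factorial_succ]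
        push_cast; ring
      have e3 : ((0+n).factorial : ℝ) = (n.factorial : ℝ) := by norm_num
      have e4 : ((2*0+2*n).factorial : ℝ) = ((2*n).factorial : ℝ) := by norm_num
      rw [e1, e2, e3, e4]
      have h1 : ((n.factorial : ℝ)) ≠ 0 := by positivity
      have h2 : (((2*n).factorial : ℝ)) ≠ 0 := by positivity
      have h3 : (2*(n:ℝ)+2) ≠ 0 := by positivity
      have h4 : (2*(n:ℝ)+1) ≠ 0 := by positivity
      field_simp
      ring
    | (m+1) =>
      show (2*(n:ℝ)+1) * uaux (n+1) (m+1) - uaux n (m+1) / 2 = 2*π^2 * uaux (n+2) m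
      simp only [uaux]
      have e1 : ((m+1+(n+1)).factorial : ℝ) = (m+n+2)*(m+n+1)*((m+n).factorial) := by
        rw [show m+1+(n+1) = ((m+n)+1)+1 by omega, Nat.factorial_succ, Nat.factorial_succ]
        push_cast; ring
      have e2 : ((2*(m+1)+2*(n+1)).factorial : ℝ)
          = (2*m+2*n+4)*(2*m+2*n+3)*(2*m+2*n+2)*(2*m+2*n+1)*((2*m+2*n).factorial) := by
        rw [show 2*(m+1)+2*(n+1) = ((((2*m+2*n)+1)+1)+1)+1 by omega,
          Nat.factorial_succ, Nat.factorial_succ, Nat.factorial_succ, Nat.factorial_succ]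
        push_cast; ring
      have e3 : ((m+1+n).factorial : ℝ) = (m+n+1)*((m+n).factorial) := by
        rw [show m+1+n = (m+n)+1 by omega, Nat.factorial_succ]; push_cast; ring
      have e4 : ((2*(m+1)+2*n).factorial : ℝ)
          = (2*m+2*n+2)*(2*m+2*n+1)*((2*m+2*n).factorial) := by
        rw [show 2*(m+1)+2*n = ((2*m+2*n)+1)+1 by omega, Nat.factorial_succ, Nat.factorial_succ]
        push_cast; ring
      have e5 : ((m+(n+2)).factorial : ℝ) = (m+n+2)*(m+n+1)*((m+n).factorial) := by
        rw [show m+(n+2) = ((m+n)+1)+1 by omega, Nat.factorial_succ, Nat.factorial_succ]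
        push_cast; ring
      have e6 : ((2*m+2*(n+2)).factorial : ℝ)
          = (2*m+2*n+4)*(2*m+2*n+3)*(2*m+2*n+2)*(2*m+2*n+1)*((2*m+2*n).factorial) := by
        rw [show 2*m+2*(n+2) = ((((2*m+2*n)+1)+1)+1)+1 by omega,
          Nat.factorial_succ, Nat.factorial_succ, Nat.factorial_succ, Nat.factorial_succ]
        push_cast; ring
      have e7 : (((m+1).factorial) : ℝ) = (m+1)*(m.factorial) := by
        rw [Nat.factorial_succ]; push_cast; ring
      have e8 : (π:ℝ)^(2*(m+1)) = π^(2*m) * π^2 := by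
        rw [show 2*(m+1) = 2*m+2 by ring, pow_add]
      rw [e1, e2, e3, e4, e5, e6, e7, e8]
      have h1 : ((m.factorial : ℝ)) ≠ 0 := by positivity
      have h2 : (((m+n).factorial : ℝ)) ≠ 0 := by positivity
      have h3 : (((2*m+2*n).factorial : ℝ)) ≠ 0 := by positivity
      have h4 : ((m:ℝ)+1) ≠ 0 := by positivity
      have c1 : (2*(m:ℝ)+2*(n:ℝ)+4) ≠ 0 := by positivity
      have c2 : (2*(m:ℝ)+2*(n:ℝ)+3) ≠ 0 := by positivity
      have c3 : (2*(m:ℝ)+2*(n:ℝ)+2) ≠ 0 := by positivity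
      have c4 : (2*(m:ℝ)+2*(n:ℝ)+1) ≠ 0 := by positivity
      rw [pow_succ]
      field_simp
      ring
  have hsum1 : Summable (fun m => (2*(n:ℝ)+1) * uaux (n+1) m) := (summable_uaux (n+1)).mul_left _
  have hsum2 : Summable (fun m => uaux n m / 2) := (summable_uaux n).div_const 2
  have hvs : Summable (fun m => v (m+1)) := by
    have : (fun m => v (m+1)) = fun m => 2*π^2 * uaux (n+2) m := rfl
    rw [this]
    exact (summable_uaux (n+2)).mul_left _
  have hv : Summable v := (summable_nat_add_iff 1).mp hvs
  have key : (2*(n:ℝ)+1) * u (n+1) - u n / 2 = 2*π^2 * u (n+2) := by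
    have h1 : (2*(n:ℝ)+1) * u (n+1) = ∑' m, (2*(n:ℝ)+1) * uaux (n+1) m := by
      rw [u, tsum_mul_left]
    have h2 : u n / 2 = ∑' m, uaux n m / 2 := by
      rw [u, tsum_div_const]
    rw [h1, h2, ← Summable.tsum_sub hsum1 hsum2, tsum_congr hterm, Summable.tsum_eq_zero_add hv]
    have hz : v 0 = 0 := rfl
    have hs : ∑' m, v (m+1) = 2*π^2 * u (n+2) := by
      have : (fun m => v (m+1)) = fun m => 2*π^2 * uaux (n+2) m := rfl
      rw [this, tsum_mul_left, u]
    rw [hz, hs, zero_add]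
  linarith [key]

theorem besselJ_eq (n : ℕ) :
    π * besselJ ((n : ℝ) - 1/2) π = Real.sqrt 2 * 2^n * π^n * u n := by
  rw [besselJ, u, ← tsum_mul_left, ← tsum_mul_left]
  apply tsum_congr
  intro m
  have hΓ : Real.Gamma ((m:ℝ) + ((n:ℝ) - 1/2) + 1)
      = Real.sqrt π * ((2*(m+n)).factorial : ℝ) / (4^(m+n) * ((m+n).factorial : ℝ)) := by
    have h : (m:ℝ) + ((n:ℝ) - 1/2) + 1 = ((m+n : ℕ):ℝ) + 1/2 := by push_cast; ring
    rw [h, gamma_half]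
  have hexp : ((π:ℝ)/2) ^ (2*(m:ℝ) + ((n:ℝ) - 1/2))
      = (π/2)^(2*m+n) * (Real.sqrt 2 / Real.sqrt π) := by
    have hpos : (0:ℝ) < π/2 := by positivity
    have h : 2*(m:ℝ) + ((n:ℝ) - 1/2) = ((2*m+n : ℕ):ℝ) - (1/2 : ℝ) := by push_cast; ring
    rw [h, Real.rpow_sub hpos, Real.rpow_natCast]
    have h2 : ((π:ℝ)/2) ^ ((1:ℝ)/2) = Real.sqrt π / Real.sqrt 2 := by
      rw [← Real.sqrt_eq_rpow, Real.sqrt_div pi_nonneg 2]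
    rw [h2]
    field_simp
  rw [hΓ, hexp, uaux]
  have f1 : ((2*(m+n)).factorial : ℝ) = ((2*m+2*n).factorial : ℝ) := by
    rw [show 2*(m+n) = 2*m+2*n by ring]
  rw [f1]
  have hsπ : Real.sqrt π ≠ 0 := by positivity
  have hs2 : Real.sqrt 2 ≠ 0 := by positivity
  have hfm : ((m.factorial : ℝ)) ≠ 0 := by positivity
  have hfmn : (((m+n).factorial : ℝ)) ≠ 0 := by positivity
  have hf2 : (((2*m+2*n).factorial : ℝ)) ≠ 0 := by positivity
  have hπ : (π:ℝ) ≠ 0 := Real.pi_ne_zero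
  have hππ : Real.sqrt π * Real.sqrt π = π := Real.mul_self_sqrt pi_nonneg
  have hp1 : ((π:ℝ)/2)^(2*m+n) = π^(2*m) * π^n / (2^(2*m) * 2^n) := by
    rw [div_pow, pow_add, pow_add]
  have hp2 : ((4:ℝ))^(m+n) = 2^(2*m) * 2^(2*n) := by
    rw [show ((4:ℝ)) = 2^2 by norm_num, ← pow_mul, show 2*(m+n) = 2*m+2*n by ring, pow_add]
  rw [hp1, hp2]
  have h2m : ((2:ℝ))^(2*m) ≠ 0 := by positivity
  have h2n : ((2:ℝ))^n ≠ 0 := by positivity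
  have h2n2 : ((2:ℝ))^(2*n) ≠ 0 := by positivity
  field_simp
  ring_nf
  rw [Real.sq_sqrt pi_nonneg]

theorem cast_desc {N K : ℕ} (h : K ≤ N) :
    (Nat.descFactorial N K : ℝ) = (N.factorial : ℝ) / (((N-K).factorial : ℝ)) := by
  have h0 : (((N-K).factorial : ℝ)) ≠ 0 := by positivity
  rw [eq_div_iff h0]
  exact_mod_cast (mul_comm ((N-K).factorial) (Nat.descFactorial N K)) ▸
    Nat.factorial_mul_descFactorial h

theorem p_ext (n N : ℕ) (hn : 2 ≤ n) (hN : n/2 ≤ N) (x : ℝ) :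
    p n x = (1 / (4*(n : ℝ)^2 - 1)) *
      ∑ k ∈ Finset.range N,
        ((-4 : ℝ)^k * x^(k+1) / ((2*k+1).factorial : ℝ)) *
          ((Nat.descFactorial (n-2) (2*k) : ℝ) / (Nat.descFactorial (2*n-3) (2*k) : ℝ)) := by
  rw [p]
  congr 1
  apply Finset.sum_subset (Finset.range_subset_range.mpr hN)
  intro k _ hk2
  simp only [Finset.mem_range, not_lt] at hk2
  have hz : Nat.descFactorial (n-2) (2*k) = 0 :=
    Nat.descFactorial_eq_zero_iff_lt.mpr (by omega)
  rw [hz]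
  simp

theorem term_key (m j : ℕ) (x : ℝ) :
    (1/((2*(m:ℝ)+7)*(2*(m:ℝ)+9))) * (((-4:ℝ))^(j+1) * x^(j+2) / ((2*(j+1)+1).factorial : ℝ)) *
        ((Nat.descFactorial (m+2) (2*(j+1)) : ℝ) / (Nat.descFactorial (2*m+5) (2*(j+1)) : ℝ))
      = ((2*(m:ℝ)+5)/(2*(m:ℝ)+9)) * ((1/((2*(m:ℝ)+5)*(2*(m:ℝ)+7))) *
          (((-4:ℝ))^(j+1) * x^(j+2) / ((2*(j+1)+1).factorial : ℝ)) *
          ((Nat.descFactorial (m+1) (2*(j+1)) : ℝ) / (Nat.descFactorial (2*m+3) (2*(j+1)) : ℝ)))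
        - (x/((2*(m:ℝ)+7)*(2*(m:ℝ)+9))) * ((1/((2*(m:ℝ)+3)*(2*(m:ℝ)+5))) *
          (((-4:ℝ))^j * x^(j+1) / ((2*j+1).factorial : ℝ)) *
          ((Nat.descFactorial m (2*j) : ℝ) / (Nat.descFactorial (2*m+1) (2*j) : ℝ))) := by
  have hf23 : ((2*(j+1)+1).factorial : ℝ)
      = (2*(j:ℝ)+3)*(2*(j:ℝ)+2)*((2*j+1).factorial : ℝ) := by
    rw [show 2*(j+1)+1 = ((2*j+1)+1)+1 by omega, Nat.factorial_succ, Nat.factorial_succ]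
    push_cast; ring
  rcases lt_trichotomy (2*j) m with hc | hc | hc
  · -- all alive
    obtain ⟨a, rfl⟩ : ∃ a, m = 2*j+1+a := ⟨m - (2*j+1), by omega⟩
    rw [cast_desc (show 2*(j+1) ≤ 2*j+1+a+2 by omega),
        cast_desc (show 2*(j+1) ≤ 2*(2*j+1+a)+5 by omega),
        cast_desc (show 2*(j+1) ≤ 2*j+1+a+1 by omega),
        cast_desc (show 2*(j+1) ≤ 2*(2*j+1+a)+3 by omega),
        cast_desc (show 2*j ≤ 2*j+1+a by omega),
        cast_desc (show 2*j ≤ 2*(2*j+1+a)+1 by omega),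
        show 2*j+1+a+2 - 2*(j+1) = a+1 by omega,
        show 2*(2*j+1+a)+5 - 2*(j+1) = 2*j+2*a+5 by omega,
        show 2*j+1+a+1 - 2*(j+1) = a by omega,
        show 2*(2*j+1+a)+3 - 2*(j+1) = 2*j+2*a+3 by omega,
        show 2*j+1+a - 2*j = a+1 by omega,
        show 2*(2*j+1+a)+1 - 2*j = 2*j+2*a+3 by omega]
    -- factorial expansions
    have E1 : ((2*j+1+a+2).factorial : ℝ)
        = (2*(j:ℝ)+(a:ℝ)+3)*(2*(j:ℝ)+(a:ℝ)+2)*((2*j+1+a).factorial : ℝ) := by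
      rw [show 2*j+1+a+2 = ((2*j+1+a)+1)+1 by omega, Nat.factorial_succ, Nat.factorial_succ]
      push_cast; ring
    have E2 : ((2*(2*j+1+a)+5).factorial : ℝ)
        = (4*(j:ℝ)+2*(a:ℝ)+7)*(4*(j:ℝ)+2*(a:ℝ)+6)*(4*(j:ℝ)+2*(a:ℝ)+5)*(4*(j:ℝ)+2*(a:ℝ)+4)
          *((2*(2*j+1+a)+1).factorial : ℝ) := by
      rw [show 2*(2*j+1+a)+5 = ((((2*(2*j+1+a)+1)+1)+1)+1)+1 by omega,
        Nat.factorial_succ, Nat.factorial_succ, Nat.factorial_succ, Nat.factorial_succ]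
      push_cast; ring
    have E3 : ((2*j+1+a+1).factorial : ℝ)
        = (2*(j:ℝ)+(a:ℝ)+2)*((2*j+1+a).factorial : ℝ) := by
      rw [show 2*j+1+a+1 = (2*j+1+a)+1 by omega, Nat.factorial_succ]
      push_cast; ring
    have E4 : ((2*(2*j+1+a)+3).factorial : ℝ)
        = (4*(j:ℝ)+2*(a:ℝ)+5)*(4*(j:ℝ)+2*(a:ℝ)+4)*((2*(2*j+1+a)+1).factorial : ℝ) := by
      rw [show 2*(2*j+1+a)+3 = ((2*(2*j+1+a)+1)+1)+1 by omega,
        Nat.factorial_succ, Nat.factorial_succ]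
      push_cast; ring
    have E5 : ((2*j+2*a+5).factorial : ℝ)
        = (2*(j:ℝ)+2*(a:ℝ)+5)*(2*(j:ℝ)+2*(a:ℝ)+4)*((2*j+2*a+3).factorial : ℝ) := by
      rw [show 2*j+2*a+5 = ((2*j+2*a+3)+1)+1 by omega, Nat.factorial_succ, Nat.factorial_succ]
      push_cast; ring
    have E6 : ((a+1).factorial : ℝ) = ((a:ℝ)+1)*((a).factorial : ℝ) := by
      rw [Nat.factorial_succ]; push_cast; ring
    rw [hf23, E1, E2, E3, E4, E5, E6]
    have n1 : ((2*j+1+a).factorial : ℝ) ≠ 0 := by positivity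
    have n2 : ((2*(2*j+1+a)+1).factorial : ℝ) ≠ 0 := by positivity
    have n3 : ((2*j+2*a+3).factorial : ℝ) ≠ 0 := by positivity
    have n4 : ((a).factorial : ℝ) ≠ 0 := by positivity
    have n5 : ((2*j+1).factorial : ℝ) ≠ 0 := by positivity
    push_cast
    field_simp
    ring
  · -- boundary : m = 2*j
    subst hc
    rw [show 2*j+2 = 2*(j+1) by ring] at *
    rw [Nat.descFactorial_self,
        show (Nat.descFactorial (2*j+1) (2*(j+1)) : ℝ) = 0 from by
          rw [Nat.descFactorial_eq_zero_iff_lt.mpr (by omega)]; norm_num,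
        Nat.descFactorial_self,
        cast_desc (show 2*(j+1) ≤ 2*(2*j)+5 by omega),
        cast_desc (show 2*j ≤ 2*(2*j)+1 by omega),
        show 2*(2*j)+5 - 2*(j+1) = 2*j+3 by omega,
        show 2*(2*j)+1 - 2*j = 2*j+1 by omega]
    have E1 : ((2*(j+1)).factorial : ℝ)
        = (2*(j:ℝ)+2)*(2*(j:ℝ)+1)*((2*j).factorial : ℝ) := by
      rw [show 2*(j+1) = ((2*j)+1)+1 by omega, Nat.factorial_succ, Nat.factorial_succ]
      push_cast; ring
    have E2 : ((2*(2*j)+5).factorial : ℝ)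
        = (4*(j:ℝ)+5)*(4*(j:ℝ)+4)*(4*(j:ℝ)+3)*(4*(j:ℝ)+2)*((2*(2*j)+1).factorial : ℝ) := by
      rw [show 2*(2*j)+5 = ((((2*(2*j)+1)+1)+1)+1)+1 by omega,
        Nat.factorial_succ, Nat.factorial_succ, Nat.factorial_succ, Nat.factorial_succ]
      push_cast; ring
    have E3 : ((2*j+3).factorial : ℝ)
        = (2*(j:ℝ)+3)*(2*(j:ℝ)+2)*(2*(j:ℝ)+1)*((2*j).factorial : ℝ) := by
      rw [show 2*j+3 = (((2*j)+1)+1)+1 by omega,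
        Nat.factorial_succ, Nat.factorial_succ, Nat.factorial_succ]
      push_cast; ring
    have E4 : ((2*j+1).factorial : ℝ) = (2*(j:ℝ)+1)*((2*j).factorial : ℝ) := by
      rw [show 2*j+1 = (2*j)+1 by omega, Nat.factorial_succ]
      push_cast; ring
    rw [hf23, E1, E2, E3, E4]
    have n1 : ((2*j).factorial : ℝ) ≠ 0 := by positivity
    have n2 : ((2*(2*j)+1).factorial : ℝ) ≠ 0 := by positivity
    push_cast
    field_simp
    ring
  · -- dead : 2*j > m
    rw [show (Nat.descFactorial (m+2) (2*(j+1)) : ℝ) = 0 from by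
          rw [Nat.descFactorial_eq_zero_iff_lt.mpr (by omega)]; norm_num,
        show (Nat.descFactorial (m+1) (2*(j+1)) : ℝ) = 0 from by
          rw [Nat.descFactorial_eq_zero_iff_lt.mpr (by omega)]; norm_num,
        show (Nat.descFactorial m (2*j) : ℝ) = 0 from by
          rw [Nat.descFactorial_eq_zero_iff_lt.mpr (by omega)]; norm_num]
    simp

theorem p_rec (n : ℕ) (hn : 1 ≤ n) (x : ℝ) :
    p (n+2) x = ((2*(n:ℝ)+1)/(2*(n:ℝ)+5)) * p (n+1) x
      - (x/((2*(n:ℝ)+3)*(2*(n:ℝ)+5))) * p n x := by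
  rcases Nat.lt_or_ge n 2 with h | h
  · have hn1 : n = 1 := by omega
    subst hn1
    rw [show (1:ℕ)+2 = 3 from rfl, show (1:ℕ)+1 = 2 from rfl]
    simp only [p]
    norm_num [Finset.sum_range_succ, Nat.descFactorial]
    ring
  · obtain ⟨m, rfl⟩ : ∃ m, n = m+2 := ⟨n-2, by omega⟩
    have hC : (2*(((m+2:ℕ)):ℝ)+1)/(2*(((m+2:ℕ)):ℝ)+5) = (2*(m:ℝ)+5)/(2*(m:ℝ)+9) := by
      push_cast; ring
    have hD : x/((2*(((m+2:ℕ)):ℝ)+3)*(2*(((m+2:ℕ)):ℝ)+5))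
        = x/((2*(m:ℝ)+7)*(2*(m:ℝ)+9)) := by push_cast; ring
    rw [hC, hD]
    have h1 : p (m+2+2) x = ∑ k ∈ Finset.range (m+4+1),
        (1/((2*(m:ℝ)+7)*(2*(m:ℝ)+9))) * (((-4:ℝ))^k * x^(k+1) / ((2*k+1).factorial : ℝ)) *
          ((Nat.descFactorial (m+2) (2*k) : ℝ) / (Nat.descFactorial (2*m+5) (2*k) : ℝ)) := by
      rw [p_ext (m+2+2) (m+4+1) (by omega) (by omega) x, Finset.mul_sum]
      apply Finset.sum_congr rfl
      intro k _
      rw [show m+2+2-2 = m+2 by omega, show 2*(m+2+2)-3 = 2*m+5 by omega]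
      push_cast
      ring
    have h2 : p (m+2+1) x = ∑ k ∈ Finset.range (m+4+1),
        (1/((2*(m:ℝ)+5)*(2*(m:ℝ)+7))) * (((-4:ℝ))^k * x^(k+1) / ((2*k+1).factorial : ℝ)) *
          ((Nat.descFactorial (m+1) (2*k) : ℝ) / (Nat.descFactorial (2*m+3) (2*k) : ℝ)) := by
      rw [p_ext (m+2+1) (m+4+1) (by omega) (by omega) x, Finset.mul_sum]
      apply Finset.sum_congr rfl
      intro k _
      rw [show m+2+1-2 = m+1 by omega, show 2*(m+2+1)-3 = 2*m+3 by omega]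
      push_cast
      ring
    have h3 : p (m+2) x = ∑ k ∈ Finset.range (m+4),
        (1/((2*(m:ℝ)+3)*(2*(m:ℝ)+5))) * (((-4:ℝ))^k * x^(k+1) / ((2*k+1).factorial : ℝ)) *
          ((Nat.descFactorial m (2*k) : ℝ) / (Nat.descFactorial (2*m+1) (2*k) : ℝ)) := by
      rw [p_ext (m+2) (m+4) (by omega) (by omega) x, Finset.mul_sum]
      apply Finset.sum_congr rfl
      intro k _
      rw [show m+2-2 = m by omega, show 2*(m+2)-3 = 2*m+1 by omega]
      push_cast
      ring
    rw [h1, h2, h3, Finset.mul_sum, Finset.mul_sum]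
    set G : ℕ → ℝ := fun k => Nat.casesOn k 0 (fun j =>
      (x/((2*(m:ℝ)+7)*(2*(m:ℝ)+9))) *
        ((1/((2*(m:ℝ)+3)*(2*(m:ℝ)+5))) * (((-4:ℝ))^j * x^(j+1) / ((2*j+1).factorial : ℝ)) *
          ((Nat.descFactorial m (2*j) : ℝ) / (Nat.descFactorial (2*m+1) (2*j) : ℝ)))) with hG
    have h5 : ∑ k ∈ Finset.range (m+4), (x/((2*(m:ℝ)+7)*(2*(m:ℝ)+9))) *
        ((1/((2*(m:ℝ)+3)*(2*(m:ℝ)+5))) * (((-4:ℝ))^k * x^(k+1) / ((2*k+1).factorial : ℝ)) *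
          ((Nat.descFactorial m (2*k) : ℝ) / (Nat.descFactorial (2*m+1) (2*k) : ℝ)))
        = ∑ k ∈ Finset.range (m+4+1), G k := by
      rw [Finset.sum_range_succ' G (m+4)]
      have hG0 : G 0 = 0 := rfl
      rw [hG0, add_zero]
    rw [h5, ← Finset.sum_sub_distrib]
    apply Finset.sum_congr rfl
    intro k _
    match k with
    | 0 =>
      have hG0 : G 0 = 0 := rfl
      rw [hG0]
      norm_num [Nat.descFactorial]
      have c1 : (2*(m:ℝ)+5) ≠ 0 := by positivity
      have c2 : (2*(m:ℝ)+7) ≠ 0 := by positivity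
      have c3 : (2*(m:ℝ)+9) ≠ 0 := by positivity
      field_simp
    | (j+1) =>
      exact term_key m j x

theorem main_lemma (n : ℕ) (hn : 1 ≤ n) :
    p n (π^2) = (n.factorial : ℝ) * 4^n * π^(2*n) * u n / ((2*n+1).factorial : ℝ) := by
  have hπ : (π:ℝ) ≠ 0 := Real.pi_ne_zero
  have key : ∀ k : ℕ,
      (p (k+1) (π^2) = ((k+1).factorial : ℝ) * 4^(k+1) * π^(2*(k+1)) * u (k+1)
          / ((2*(k+1)+1).factorial : ℝ)) ∧
      (p (k+2) (π^2) = ((k+2).factorial : ℝ) * 4^(k+2) * π^(2*(k+2)) * u (k+2)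
          / ((2*(k+2)+1).factorial : ℝ)) := by
    intro k
    induction k with
    | zero =>
      constructor
      · rw [u_one]
        simp [p]
      · have hu2 : u 2 = 1/(4*π^2) := by
          have h := u_rec 0
          rw [u_one, u_zero] at h
          have h2 : (2:ℝ)*π^2 * u 2 = 1/2 := by push_cast at h; linarith
          field_simp at h2 ⊢
          linarith
        rw [hu2]
        simp only [p]
        rw [Finset.sum_range_succ]
        norm_num [Nat.descFactorial, Nat.factorial]
        field_simp
        ring
    | succ k ih =>
      refine ⟨ih.2, ?_⟩
      have hu3 : u (k+3) = ((2*(k:ℝ)+3) * u (k+2) - u (k+1)/2)/(2*π^2) := by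
        have h := u_rec (k+1)
        simp only [show k+1+1 = k+2 from rfl, show k+1+2 = k+3 from rfl] at h
        push_cast at h
        rw [eq_div_iff (by positivity : (2:ℝ)*π^2 ≠ 0)]
        linarith
      have hp := p_rec (k+1) (by omega) (π^2)
      simp only [show k+1+2 = k+3 from rfl, show k+1+1 = k+2 from rfl] at hp
      simp only [show k+1+2 = k+3 from rfl] 
      rw [hp, ih.1, ih.2, hu3]
      have F1 : ((k+3).factorial : ℝ) = ((k:ℝ)+3) * ((k+2).factorial : ℝ) := by
        rw [show k+3 = (k+2)+1 from rfl, Nat.factorial_succ]; push_cast; ring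
      have F2 : ((2*(k+3)+1).factorial : ℝ)
          = (2*(k:ℝ)+7)*(2*(k:ℝ)+6)*((2*(k+2)+1).factorial : ℝ) := by
        rw [show 2*(k+3)+1 = ((2*(k+2)+1)+1)+1 by omega, Nat.factorial_succ, Nat.factorial_succ]
        push_cast; ring
      have F3 : ((2*(k+2)+1).factorial : ℝ)
          = (2*(k:ℝ)+5)*(2*(k:ℝ)+4)*((2*(k+1)+1).factorial : ℝ) := by
        rw [show 2*(k+2)+1 = ((2*(k+1)+1)+1)+1 by omega, Nat.factorial_succ, Nat.factorial_succ]
        push_cast; ring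
      have F4 : ((k+2).factorial : ℝ) = ((k:ℝ)+2) * ((k+1).factorial : ℝ) := by
        rw [show k+2 = (k+1)+1 from rfl, Nat.factorial_succ]; push_cast; ring
      have P1 : (π:ℝ)^(2*(k+3)) = π^(2*(k+2)) * π^2 := by
        rw [show 2*(k+3) = 2*(k+2)+2 by omega, pow_add]
      have P2 : (π:ℝ)^(2*(k+2)) = π^(2*(k+1)) * π^2 := by
        rw [show 2*(k+2) = 2*(k+1)+2 by omega, pow_add]
      have P3 : ((4:ℝ))^(k+3) = 4 * 4^(k+2) := by rw [pow_succ]; ring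
      have P4 : ((4:ℝ))^(k+2) = 4 * 4^(k+1) := by rw [pow_succ]; ring
      rw [F1, F2, F3, F4, P1, P2, P3, P4]
      have n1 : ((k+1).factorial : ℝ) ≠ 0 := by positivity
      have n2 : ((2*(k+1)+1).factorial : ℝ) ≠ 0 := by positivity
      push_cast
      field_simp
      ring
  obtain ⟨m, rfl⟩ : ∃ m, n = m+1 := ⟨n-1, by omega⟩
  exact (key m).1

theorem p_eq_besselJ (n : ℕ) (hn : 2 ≤ n) :
    p n (π^2) = (π / Real.sqrt 2) * ((n.factorial : ℝ) / ((2*n+1).factorial : ℝ))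
      * (2*π)^n * besselJ ((n : ℝ) - 1/2) π := by
  have hπ : (π:ℝ) ≠ 0 := Real.pi_ne_zero
  have hs2 : Real.sqrt 2 ≠ 0 := by positivity
  have hB : besselJ ((n : ℝ) - 1/2) π = Real.sqrt 2 * 2^n * π^n * u n / π := by
    rw [eq_div_iff hπ]
    have := besselJ_eq n
    linarith
  rw [main_lemma n (by omega), hB]
  have h1 : ((2:ℝ)*π)^n = 2^n * π^n := mul_pow 2 π n
  have h2 : (π:ℝ)^(2*n) = π^n * π^n := by rw [two_mul, pow_add]
  have h3 : ((4:ℝ))^n = 2^n * 2^n := by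
    rw [show ((4:ℝ)) = 2*2 by norm_num, mul_pow]
  rw [h1, h2, h3]
  have n1 : ((2*n+1).factorial : ℝ) ≠ 0 := by positivity
  field_simp
end
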